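/- For every integer d ≥ 4 there exists a Steiner triple system on a set of n = 2^{d+1} − 1 points which has a minimal spreading set of size d = log₂(n+1) − 1. -/

import Mathlib

/-- A Steiner triple system on `V`: a family `T` of 3-element `Finset`s such that
every pair of distinct points lies in exactly one member of `T`. -/
def IsSTS {V : Type*} (T : Set (Finset V)) : Prop :=
  (∀ t ∈ T, t.card = 3) ∧
    ∀ x y : V, x ≠ y → ∃! t : Finset V, t ∈ T ∧ x ∈ t ∧ y ∈ t

/-- `W` is closed w.r.t. the triple system `T`: whenever a triple of `T` contains two
points of `W`, all (in particular the third) of its points lie in `W`. -/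
def StsClosed {V : Type*} (T : Set (Finset V)) (W : Set V) : Prop :=
  ∀ t ∈ T, ∀ x ∈ t, ∀ y ∈ t, x ≠ y → x ∈ W → y ∈ W → ∀ z ∈ t, z ∈ W

/-- The closure of `S` w.r.t. `T`: the smallest closed set containing `S`. -/
def stsCl {V : Type*} (T : Set (Finset V)) (S : Set V) : Set V :=
  ⋂₀ {W : Set V | S ⊆ W ∧ StsClosed T W}

/-- `S` is a spreading set: its closure is the whole point set. -/
def IsSpreading {V : Type*} (T : Set (Finset V)) (S : Set V) : Prop :=
  stsCl T S = Set.univ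

/-- `S` is a minimal spreading set: it is spreading but no proper subset is. -/
def IsMinSpreading {V : Type*} (T : Set (Finset V)) (S : Set V) : Prop :=
  IsSpreading T S ∧ ∀ S' : Set V, S' ⊂ S → ¬ IsSpreading T S'


section Basic
variable {V : Type*} {T : Set (Finset V)} {S W : Set V}

lemma subset_stsCl : S ⊆ stsCl T S := fun x hx W hW => hW.1 hx

lemma stsCl_subset (hSW : S ⊆ W) (hW : StsClosed T W) : stsCl T S ⊆ W :=
  Set.sInter_subset_of_mem ⟨hSW, hW⟩

lemma stsClosed_stsCl : StsClosed T (stsCl T S) := by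
  intro t ht x hx y hy hxy hxW hyW z hz W hW
  exact hW.2 t ht x hx y hy hxy (hxW W hW) (hyW W hW) z hz

lemma not_spreading_of_closed (hSW : S ⊆ W) (hW : StsClosed T W) (u : V) (hu : u ∉ W) :
    ¬ IsSpreading T S := by
  intro h
  have : u ∈ stsCl T S := h ▸ Set.mem_univ u
  exact hu (stsCl_subset hSW hW this)

end Basic

section Transport
variable {α β : Type*}

def tmap (e : α ≃ β) (T : Set (Finset α)) : Set (Finset β) :=
  {t | t.map e.symm.toEmbedding ∈ T}

lemma tmap_tmap (e : α ≃ β) (T : Set (Finset α)) : tmap e.symm (tmap e T) = T := by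
  ext t
  simp [tmap, Finset.map_map]

lemma mem_map_symm (e : α ≃ β) {t : Finset β} {x : α} :
    x ∈ t.map e.symm.toEmbedding ↔ e x ∈ t := by
  simp [Finset.mem_map_equiv]

lemma isSTS_tmap (e : α ≃ β) {T : Set (Finset α)} (h : IsSTS T) : IsSTS (tmap e T) := by
  constructor
  · intro t ht
    have := h.1 _ ht
    simpa using this
  · intro x y hxy
    obtain ⟨u, ⟨huT, hxu, hyu⟩, huniq⟩ := h.2 (e.symm x) (e.symm y) (fun hc => hxy (by simpa using congrArg e hc))
    refine ⟨u.map e.toEmbedding, ⟨?_, ?_, ?_⟩, ?_⟩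
    · show (u.map e.toEmbedding).map e.symm.toEmbedding ∈ T
      rw [Finset.map_map]
      convert huT using 2
      ext z; simp
    · rw [Finset.mem_map_equiv]; simpa using hxu
    · rw [Finset.mem_map_equiv]; simpa using hyu
    · rintro t ⟨htT, hxt, hyt⟩
      have := huniq (t.map e.symm.toEmbedding) ⟨htT, (mem_map_symm e).2 (by simpa using hxt), (mem_map_symm e).2 (by simpa using hyt)⟩
      rw [← this, Finset.map_map]
      convert (Finset.map_refl (s := t)).symm using 2
      ext z; simp

lemma stsClosed_tmap (e : α ≃ β) {T : Set (Finset α)} {W : Set α} (h : StsClosed T W) :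
    StsClosed (tmap e T) (e.symm ⁻¹' W) := by
  intro t ht x hx y hy hxy hxW hyW z hz
  exact h _ ht _ ((mem_map_symm e).2 (by simpa using hx) : e.symm x ∈ _) _
    ((mem_map_symm e).2 (by simpa using hy)) (fun hc => hxy (by simpa using congrArg e hc))
    hxW hyW _ ((mem_map_symm e).2 (by simpa using hz))

lemma isSpreading_tmap (e : α ≃ β) {T : Set (Finset α)} {S : Set α} (h : IsSpreading T S) :
    IsSpreading (tmap e T) (e '' S) := by
  have key : Set.univ ⊆ stsCl (tmap e T) (e '' S) := by
    intro b _
    have hb : e.symm b ∈ stsCl T S := h ▸ Set.mem_univ _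
    have hsub : stsCl T S ⊆ e ⁻¹' (stsCl (tmap e T) (e '' S)) := by
      apply stsCl_subset
      · intro a ha; exact subset_stsCl (Set.mem_image_of_mem e ha)
      · intro t ht x hx y hy hxy hxW hyW z hz
        refine stsClosed_stsCl (t.map e.toEmbedding) ?_ (e x) ?_ (e y) ?_ ?_ hxW hyW (e z) ?_
        · show (t.map e.toEmbedding).map e.symm.toEmbedding ∈ T
          rw [Finset.map_map]
          convert ht using 2
          ext w; simp
        · simp [Finset.mem_map_equiv, hx]
        · simp [Finset.mem_map_equiv, hy]
        · simpa using (fun hc => hxy (e.injective hc))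
        · simp [Finset.mem_map_equiv, hz]
    have := hsub hb
    simpa using this
  exact Set.eq_univ_of_univ_subset key

lemma isMinSpreading_tmap (e : α ≃ β) {T : Set (Finset α)} {S : Set α}
    (h : IsMinSpreading T S) : IsMinSpreading (tmap e T) (e '' S) := by
  refine ⟨isSpreading_tmap e h.1, ?_⟩
  intro S' hS' hsp
  have h2 : IsSpreading (tmap e.symm (tmap e T)) (e.symm '' S') := isSpreading_tmap e.symm hsp
  rw [tmap_tmap] at h2
  have hss : e.symm '' S' ⊂ S := by
    have := Set.image_mono (f := e.symm) hS'.1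
    rw [Set.image_image] at this
    simp only [Equiv.symm_apply_apply, Set.image_id'] at this
    refine ⟨this, fun hc => hS'.2 ?_⟩
    intro a ha
    have : e.symm a ∈ e.symm '' S' := hc (by simpa using Set.mem_image_of_mem e.symm ha)
    obtain ⟨b, hb, hba⟩ := this
    rwa [e.symm.injective hba] at hb
  exact h.2 _ hss h2
end Transport

section Quasi
variable {V : Type*} [DecidableEq V] (f : V → V → V)

def qT (f : V → V → V) : Set (Finset V) := {t | ∃ x y : V, x ≠ y ∧ t = {x, y, f x y}}

lemma mem_qT {x y : V} (hxy : x ≠ y) :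
    ({x, y, f x y} : Finset V) ∈ qT f := ⟨x, y, hxy, rfl⟩

variable (hcomm : ∀ x y : V, x ≠ y → f x y = f y x)
  (hne1 : ∀ x y : V, x ≠ y → f x y ≠ x)
  (hne2 : ∀ x y : V, x ≠ y → f x y ≠ y)
  (hinv : ∀ x y : V, x ≠ y → f x (f x y) = y)

include hcomm hne1 hne2 hinv in
lemma qT_unique : ∀ x y : V, x ≠ y → ∀ t ∈ qT f, x ∈ t → y ∈ t → t = {x, y, f x y} := by
  intro x y hxy t ht hxt hyt
  obtain ⟨a, b, hab, rfl⟩ := ht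
  have hfa := hne1 a b hab
  have hfb := hne2 a b hab
  have e1 : f a (f a b) = b := hinv a b hab
  have e2 : f b (f a b) = a := by
    rw [hcomm a b hab]; exact hinv b a (Ne.symm hab)
  have e3 : f (f a b) a = b := by
    rw [hcomm (f a b) a hfa]; exact hinv a b hab
  have e4 : f (f a b) b = a := by
    rw [hcomm (f a b) b hfb, hcomm a b hab]; exact hinv b a (Ne.symm hab)
  simp only [Finset.mem_insert, Finset.mem_singleton] at hxt hyt
  rcases hxt with h1 | h1 | h1 <;> rcases hyt with h2 | h2 | h2 <;>
    first
    | exact absurd (h1.trans h2.symm) hxy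
    | (rw [h1, h2] <;>
       first
       | rfl
       | (first
          | rw [e1]
          | rw [e2]
          | rw [e3]
          | rw [e4]
          | rw [← hcomm a b hab]
          | skip) <;>
         (ext z; simp only [Finset.mem_insert, Finset.mem_singleton]; tauto))

include hcomm hne1 hne2 hinv in
lemma isSTS_qT : IsSTS (qT f) := by
  constructor
  · rintro t ⟨x, y, hxy, rfl⟩
    rw [Finset.card_insert_of_notMem, Finset.card_insert_of_notMem, Finset.card_singleton]
    · simp [Ne.symm (hne2 x y hxy)]
    · simp [hxy, Ne.symm (hne1 x y hxy)]
  · intro x y hxy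
    refine ⟨{x, y, f x y}, ⟨mem_qT f hxy, by simp, by simp⟩, ?_⟩
    rintro t ⟨ht, hxt, hyt⟩
    exact qT_unique f hcomm hne1 hne2 hinv x y hxy t ht hxt hyt

lemma mem_stsCl_step {S : Set V} {x y : V} (hx : x ∈ stsCl (qT f) S)
    (hy : y ∈ stsCl (qT f) S) (hxy : x ≠ y) : f x y ∈ stsCl (qT f) S :=
  stsClosed_stsCl ({x, y, f x y}) (mem_qT f hxy) x (by simp) y (by simp) hxy hx hy _ (by simp)

end Quasi

section Construction
open Classical
variable {d : ℕ}

abbrev Vec (d : ℕ) := Fin (d + 1) → ZMod 2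

def bv (d : ℕ) (m : ℕ) : Vec d := fun k => if k.val = m then 1 else 0

lemma z2_add_self : ∀ a : ZMod 2, a + a = 0 := by decide

lemma vec_add_self (v : Vec d) : v + v = 0 := by
  funext i; exact z2_add_self (v i)

lemma vec_add_eq_zero_iff {v w : Vec d} : v + w = 0 ↔ v = w := by
  constructor
  · intro h
    funext i
    have h2 := congrFun h i
    have h3 : ∀ a b : ZMod 2, a + b = 0 → a = b := by decide
    exact h3 _ _ h2
  · rintro rfl; exact vec_add_self v

lemma add_bv4_cancel (u : Vec d) : u + bv d 4 + bv d 4 = u := by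
  rw [add_assoc, vec_add_self, add_zero]

def InP (d : ℕ) (v : Vec d) : Prop :=
  (∀ j : Fin (d + 1), j.val ≠ 0 → j.val ≠ 1 → j.val ≠ 4 → v j = 0) ∧ v ≠ 0 ∧ v ≠ bv d 4

noncomputable def g (d : ℕ) (v w : Vec d) : Vec d :=
  if InP d v ∧ InP d w ∧ v + w ≠ bv d 4 then v + w + bv d 4 else v + w

lemma g_comm (v w : Vec d) : g d v w = g d w v := by
  unfold g
  exact if_congr (by constructor <;> rintro ⟨h1, h2, h3⟩ <;> exact ⟨h2, h1, by rwa [add_comm]⟩)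
    (by rw [add_comm v w]) (by rw [add_comm v w])

lemma g_pasch {v w : Vec d} (h : InP d v) (h2 : InP d w) (h3 : v + w ≠ bv d 4) :
    g d v w = v + w + bv d 4 := by
  unfold g; rw [if_pos ⟨h, h2, h3⟩]

lemma g_proj {v w : Vec d} (h : ¬(InP d v ∧ InP d w ∧ v + w ≠ bv d 4)) :
    g d v w = v + w := by
  unfold g; rw [if_neg h]

lemma g_ne_left {v w : Vec d} (hw : w ≠ 0) (hvw : v ≠ w) : g d v w ≠ v := by
  unfold g
  split_ifs with h
  · intro hc
    have h5 : v + (w + bv d 4) = v + 0 := by rw [add_zero, ← add_assoc]; exact hc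
    exact h.2.1.2.2 (vec_add_eq_zero_iff.mp (add_left_cancel h5))
  · intro hc
    have h5 : v + w = v + 0 := by rw [add_zero]; exact hc
    exact hw (add_left_cancel h5)

lemma g_ne_right {v w : Vec d} (hv : v ≠ 0) (hvw : v ≠ w) : g d v w ≠ w := by
  rw [g_comm]; exact g_ne_left hv (Ne.symm hvw)

lemma g_ne_zero {v w : Vec d} (hvw : v ≠ w) : g d v w ≠ 0 := by
  unfold g
  split_ifs with h
  · intro hc
    have h5 : v + w + bv d 4 + bv d 4 = 0 + bv d 4 := by rw [hc]
    rw [add_bv4_cancel, zero_add] at h5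
    exact h.2.2 h5
  · intro hc
    exact hvw (vec_add_eq_zero_iff.mp hc)

lemma InP_g {v w : Vec d} (hv : InP d v) (hw : InP d w) (h4 : v + w ≠ bv d 4)
    (hvw : v ≠ w) : InP d (v + w + bv d 4) := by
  refine ⟨?_, ?_, ?_⟩
  · intro j hj0 hj1 hj4
    have e4 : bv d 4 j = 0 := by simp [bv, hj4]
    simp only [Pi.add_apply, hv.1 j hj0 hj1 hj4, hw.1 j hj0 hj1 hj4, e4, add_zero]
  · intro hc
    have h5 : v + w + bv d 4 + bv d 4 = 0 + bv d 4 := by rw [hc]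
    rw [add_bv4_cancel, zero_add] at h5
    exact h4 h5
  · intro hc
    have h5 : v + w + bv d 4 + bv d 4 = bv d 4 + bv d 4 := by rw [hc]
    rw [add_bv4_cancel, vec_add_self] at h5
    exact hvw (vec_add_eq_zero_iff.mp h5)

lemma g_inv {v w : Vec d} (hv : v ≠ 0) (hw : w ≠ 0) (hvw : v ≠ w) :
    g d v (g d v w) = w := by
  have hsimp : v + (v + w) = w := by rw [← add_assoc, vec_add_self, zero_add]
  by_cases hP : InP d v ∧ InP d w ∧ v + w ≠ bv d 4
  · rw [g_pasch hP.1 hP.2.1 hP.2.2]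
    have hz : InP d (v + w + bv d 4) := InP_g hP.1 hP.2.1 hP.2.2 hvw
    have hsum : v + (v + w + bv d 4) = w + bv d 4 := by
      rw [← add_assoc, ← add_assoc, vec_add_self, zero_add]
    have hne4 : v + (v + w + bv d 4) ≠ bv d 4 := by
      rw [hsum]
      intro hc
      have h5 : w + bv d 4 + bv d 4 = bv d 4 + bv d 4 := by rw [hc]
      rw [add_bv4_cancel, vec_add_self] at h5
      exact hw h5
    rw [g_pasch hP.1 hz hne4, hsum, add_bv4_cancel]
  · rw [g_proj hP]
    have hnp2 : ¬(InP d v ∧ InP d (v + w) ∧ v + (v + w) ≠ bv d 4) := by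
      rintro ⟨h1, h2, h3⟩
      rw [hsimp] at h3
      refine hP ⟨h1, ⟨?_, hw, h3⟩, h2.2.2⟩
      intro j hj0 hj1 hj4
      have h6 := h2.1 j hj0 hj1 hj4
      have hv0 := h1.1 j hj0 hj1 hj4
      simp only [Pi.add_apply, hv0, zero_add] at h6
      exact h6
    rw [g_proj hnp2, hsimp]

abbrev Pt (d : ℕ) := {v : Vec d // v ≠ 0}

noncomputable def fP (x y : Pt d) : Pt d :=
  if h : x = y then x else ⟨g d x.1 y.1, g_ne_zero (fun hc => h (Subtype.ext hc))⟩

lemma fP_val {x y : Pt d} (h : x ≠ y) : (fP x y).1 = g d x.1 y.1 := by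
  rw [fP, dif_neg h]

lemma val_ne {x y : Pt d} (h : x ≠ y) : x.1 ≠ y.1 := fun hc => h (Subtype.ext hc)

lemma fP_comm (x y : Pt d) (h : x ≠ y) : fP x y = fP y x :=
  Subtype.ext (by rw [fP_val h, fP_val (Ne.symm h), g_comm])

lemma fP_ne_left (x y : Pt d) (h : x ≠ y) : fP x y ≠ x := by
  intro hc
  exact g_ne_left y.2 (val_ne h) (by rw [← fP_val h, hc])

lemma fP_ne_right (x y : Pt d) (h : x ≠ y) : fP x y ≠ y := by
  intro hc
  exact g_ne_right x.2 (val_ne h) (by rw [← fP_val h, hc])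

lemma fP_inv (x y : Pt d) (h : x ≠ y) : fP x (fP x y) = y := by
  have h2 : x ≠ fP x y := Ne.symm (fP_ne_left x y h)
  apply Subtype.ext
  rw [fP_val h2, fP_val h, g_inv x.2 y.2 (val_ne h)]

noncomputable def Td (d : ℕ) : Set (Finset (Pt d)) := qT (fP (d := d))

lemma isSTS_Td : IsSTS (Td d) :=
  isSTS_qT (fP (d := d)) (fun x y h => fP_comm x y h) (fun x y h => fP_ne_left x y h)
    (fun x y h => fP_ne_right x y h) (fun x y h => fP_inv x y h)

def Mh (i : Fin (d + 1)) : Set (Pt d) := {x | x.1 i = 0}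

lemma coord_fP {x y : Pt d} (h : x ≠ y) {i : Fin (d + 1)} (hi : i.val ≠ 4) :
    (fP x y).1 i = x.1 i + y.1 i := by
  rw [fP_val h]
  unfold g
  split_ifs with hc
  · simp [bv, hi]
  · rfl

lemma stsClosed_Mh {i : Fin (d + 1)} (hi : i.val ≠ 4) :
    StsClosed (Td d) (Mh i) := by
  rintro t ⟨a, b, hab, rfl⟩ x hx y hy hxy hxW hyW z hz
  have hcc : (fP a b).1 i = a.1 i + b.1 i := coord_fP hab hi
  simp only [Finset.mem_insert, Finset.mem_singleton] at hx hy hz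
  simp only [Mh, Set.mem_setOf_eq] at hxW hyW ⊢
  have hz2 : ∀ p q : ZMod 2, p = 0 → p + q = 0 → q = 0 := by decide
  have hz3 : ∀ p q : ZMod 2, q = 0 → p + q = 0 → p = 0 := by decide
  have key : a.1 i = 0 ∧ b.1 i = 0 := by
    rcases hx with rfl | rfl | rfl <;> rcases hy with rfl | rfl | rfl
    · exact absurd rfl hxy
    · exact ⟨hxW, hyW⟩
    · exact ⟨hxW, hz2 _ _ hxW (by rw [← hcc]; exact hyW)⟩
    · exact ⟨hyW, hxW⟩
    · exact absurd rfl hxy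
    · exact ⟨hz3 _ _ hxW (by rw [← hcc]; exact hyW), hxW⟩
    · exact ⟨hyW, hz2 _ _ hyW (by rw [← hcc]; exact hxW)⟩
    · exact ⟨hz3 _ _ hyW (by rw [← hcc]; exact hxW), hyW⟩
    · exact absurd rfl hxy
  rcases hz with rfl | rfl | rfl
  · exact key.1
  · exact key.2
  · rw [hcc, key.1, key.2, add_zero]
end Construction

section Spread
variable {d : ℕ}

lemma bv_ne_zero {m : ℕ} (hm : m < d + 1) : bv d m ≠ 0 := by
  intro hc
  have h := congrFun hc ⟨m, hm⟩
  simp [bv] at h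

def Pb (j : Fin (d + 1)) : Pt d := ⟨bv d j.val, bv_ne_zero j.isLt⟩

lemma Pb_inj : Function.Injective (Pb (d := d)) := by
  intro j k h
  have h2 := congrFun (congrArg Subtype.val h) j
  simp only [Pb, bv] at h2
  rw [if_pos trivial] at h2
  split_ifs at h2 with hc
  · exact Fin.ext hc
  · exact absurd h2 one_ne_zero

noncomputable def Ud (hd : 4 ≤ d) : Finset (Pt d) :=
  (Finset.univ.erase (⟨4, by omega⟩ : Fin (d + 1))).map ⟨Pb, Pb_inj⟩

lemma card_Ud (hd : 4 ≤ d) : (Ud hd).card = d := by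
  rw [Ud, Finset.card_map, Finset.card_erase_of_mem (Finset.mem_univ _), Finset.card_univ]
  simp

lemma mem_Ud (hd : 4 ≤ d) {j : Fin (d + 1)} (hj : j.val ≠ 4) : Pb j ∈ Ud hd := by
  rw [Ud, Finset.mem_map]
  refine ⟨j, Finset.mem_erase.mpr ⟨fun hc => hj (by rw [hc]), Finset.mem_univ _⟩, rfl⟩

lemma step_proj {S : Set (Pt d)} {x y z : Pt d} (hx : x ∈ stsCl (Td d) S)
    (hy : y ∈ stsCl (Td d) S) (hxy : x ≠ y)
    (hnp : ¬(InP d x.1 ∧ InP d y.1 ∧ x.1 + y.1 ≠ bv d 4)) (hz : z.1 = x.1 + y.1) :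
    z ∈ stsCl (Td d) S := by
  have h := mem_stsCl_step (fP (d := d)) hx hy hxy
  have h2 : z = fP x y := Subtype.ext (by rw [fP_val hxy, g_proj hnp, hz])
  rwa [h2]

lemma step_pasch {S : Set (Pt d)} {x y z : Pt d} (hx : x ∈ stsCl (Td d) S)
    (hy : y ∈ stsCl (Td d) S) (hxy : x ≠ y)
    (h1 : InP d x.1) (h2 : InP d y.1) (h4 : x.1 + y.1 ≠ bv d 4)
    (hz : z.1 = x.1 + y.1 + bv d 4) :
    z ∈ stsCl (Td d) S := by
  have h := mem_stsCl_step (fP (d := d)) hx hy hxy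
  have h5 : z = fP x y := Subtype.ext (by rw [fP_val hxy, g_pasch h1 h2 h4, hz])
  rwa [h5]

lemma not_InP_coord {v : Vec d} (j : Fin (d + 1)) (h0 : j.val ≠ 0) (h1 : j.val ≠ 1)
    (h4 : j.val ≠ 4) (hv : v j ≠ 0) : ¬ InP d v := fun h => hv (h.1 j h0 h1 h4)

lemma not_InP_bv4 : ¬ InP d (bv d 4) := fun h => h.2.2 rfl

lemma InP_bv0 (hd : 4 ≤ d) : InP d (bv d 0) := by
  refine ⟨fun j hj0 hj1 hj4 => by simp [bv, hj0], bv_ne_zero (by omega), fun hc => ?_⟩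
  have h := congrFun hc ⟨0, by omega⟩
  simp [bv] at h

lemma InP_bv1 (hd : 4 ≤ d) : InP d (bv d 1) := by
  refine ⟨fun j hj0 hj1 hj4 => by simp [bv, hj1], bv_ne_zero (by omega), fun hc => ?_⟩
  have h := congrFun hc ⟨1, by omega⟩
  simp [bv] at h

lemma InP_s04 (hd : 4 ≤ d) : InP d (bv d 0 + bv d 4) := by
  refine ⟨fun j hj0 hj1 hj4 => by simp [bv, hj0, hj4], fun hc => ?_, fun hc => ?_⟩
  · have h := congrFun hc ⟨0, by omega⟩
    simp [bv] at h
  · have h := congrFun hc ⟨0, by omega⟩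
    simp [bv] at h

lemma InP_s14 (hd : 4 ≤ d) : InP d (bv d 1 + bv d 4) := by
  refine ⟨fun j hj0 hj1 hj4 => by simp [bv, hj1, hj4], fun hc => ?_, fun hc => ?_⟩
  · have h := congrFun hc ⟨1, by omega⟩
    simp [bv] at h
  · have h := congrFun hc ⟨1, by omega⟩
    simp [bv] at h

lemma isSpreading_Ud (hd : 4 ≤ d) : IsSpreading (Td d) ↑(Ud hd) := by
  classical
  have hbase : ∀ j : Fin (d + 1), j.val ≠ 4 → Pb j ∈ stsCl (Td d) ↑(Ud hd) :=
    fun j hj => subset_stsCl (Finset.mem_coe.mpr (mem_Ud hd hj))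
  have h0d : (0 : ℕ) < d + 1 := by omega
  have h1d : (1 : ℕ) < d + 1 := by omega
  have h2d : (2 : ℕ) < d + 1 := by omega
  have h4d : (4 : ℕ) < d + 1 := by omega
  have hP0 : Pb ⟨0, h0d⟩ ∈ stsCl (Td d) ↑(Ud hd) := hbase _ (by simp)
  have hP1 : Pb ⟨1, h1d⟩ ∈ stsCl (Td d) ↑(Ud hd) := hbase _ (by simp)
  have hP2 : Pb ⟨2, h2d⟩ ∈ stsCl (Td d) ↑(Ud hd) := hbase _ (by simp)
  -- step 1 : D = bv0 + bv1 + bv4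
  have hD : (⟨bv d 0 + bv d 1 + bv d 4, by
      intro hc; have h := congrFun hc ⟨0, h0d⟩; simp [bv] at h⟩ : Pt d) ∈
      stsCl (Td d) ↑(Ud hd) := by
    refine step_pasch hP0 hP1 ?_ (InP_bv0 hd) (InP_bv1 hd) ?_ rfl
    · intro hc; have h := congrFun (congrArg Subtype.val hc) ⟨0, h0d⟩; simp [Pb, bv] at h
    · intro hc; have h := congrFun hc ⟨0, h0d⟩; simp [Pb, bv] at h
  -- step 2 : q = bv0 + bv1 + bv2 + bv4
  have hq : (⟨bv d 0 + bv d 1 + bv d 2 + bv d 4, by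
      intro hc; have h := congrFun hc ⟨0, h0d⟩; simp [bv] at h⟩ : Pt d) ∈
      stsCl (Td d) ↑(Ud hd) := by
    refine step_proj hP2 hD ?_ ?_ ?_
    · intro hc; have h := congrFun (congrArg Subtype.val hc) ⟨0, h0d⟩; simp [Pb, bv] at h
    · exact fun hh => (not_InP_coord ⟨2, h2d⟩ (by simp) (by simp) (by simp)
        (by simp [Pb, bv])) hh.1
    · show bv d 0 + bv d 1 + bv d 2 + bv d 4 = bv d 2 + (bv d 0 + bv d 1 + bv d 4)
      ring
  -- step 3 : r1 = bv1 + bv2 + bv4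
  have hr1 : (⟨bv d 1 + bv d 2 + bv d 4, by
      intro hc; have h := congrFun hc ⟨1, h1d⟩; simp [bv] at h⟩ : Pt d) ∈
      stsCl (Td d) ↑(Ud hd) := by
    refine step_proj hP0 hq ?_ ?_ ?_
    · intro hc; have h := congrFun (congrArg Subtype.val hc) ⟨1, h1d⟩; simp [Pb, bv] at h
    · exact fun hh => (not_InP_coord ⟨2, h2d⟩ (by simp) (by simp) (by simp)
        (by simp [bv])) hh.2.1
    · show bv d 1 + bv d 2 + bv d 4 = bv d 0 + (bv d 0 + bv d 1 + bv d 2 + bv d 4)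
      funext k; simp only [Pi.add_apply, bv]; split_ifs <;> first | rfl | decide | omega
  -- step 4 : r2 = bv2 + bv4
  have hr2 : (⟨bv d 2 + bv d 4, by
      intro hc; have h := congrFun hc ⟨2, h2d⟩; simp [bv] at h⟩ : Pt d) ∈
      stsCl (Td d) ↑(Ud hd) := by
    refine step_proj hP1 hr1 ?_ ?_ ?_
    · intro hc; have h := congrFun (congrArg Subtype.val hc) ⟨2, h2d⟩; simp [Pb, bv] at h
    · exact fun hh => (not_InP_coord ⟨2, h2d⟩ (by simp) (by simp) (by simp)
        (by simp [bv])) hh.2.1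
    · show bv d 2 + bv d 4 = bv d 1 + (bv d 1 + bv d 2 + bv d 4)
      funext k; simp only [Pi.add_apply, bv]; split_ifs <;> first | rfl | decide | omega
  -- step 5 : e4
  have hP4 : Pb ⟨4, h4d⟩ ∈ stsCl (Td d) ↑(Ud hd) := by
    refine step_proj hP2 hr2 ?_ ?_ ?_
    · intro hc; have h := congrFun (congrArg Subtype.val hc) ⟨4, h4d⟩; simp [Pb, bv] at h
    · exact fun hh => (not_InP_coord ⟨2, h2d⟩ (by simp) (by simp) (by simp)
        (by simp [bv])) hh.2.1
    · show bv d 4 = bv d 2 + (bv d 2 + bv d 4)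
      funext k; simp only [Pi.add_apply, bv]; split_ifs <;> first | rfl | decide | omega
  -- step 6 : s04
  have hs04 : (⟨bv d 0 + bv d 4, by
      intro hc; have h := congrFun hc ⟨0, h0d⟩; simp [bv] at h⟩ : Pt d) ∈
      stsCl (Td d) ↑(Ud hd) := by
    refine step_proj hP0 hP4 ?_ ?_ rfl
    · intro hc; have h := congrFun (congrArg Subtype.val hc) ⟨0, h0d⟩; simp [Pb, bv] at h
    · exact fun hh => not_InP_bv4 hh.2.1
  -- step 7 : s14
  have hs14 : (⟨bv d 1 + bv d 4, by
      intro hc; have h := congrFun hc ⟨1, h1d⟩; simp [bv] at h⟩ : Pt d) ∈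
      stsCl (Td d) ↑(Ud hd) := by
    refine step_proj hP1 hP4 ?_ ?_ rfl
    · intro hc; have h := congrFun (congrArg Subtype.val hc) ⟨1, h1d⟩; simp [Pb, bv] at h
    · exact fun hh => not_InP_bv4 hh.2.1
  -- step 8 : s01 = bv0 + bv1 (Pasch step)
  have hs01 : (⟨bv d 0 + bv d 1, by
      intro hc; have h := congrFun hc ⟨0, h0d⟩; simp [bv] at h⟩ : Pt d) ∈
      stsCl (Td d) ↑(Ud hd) := by
    refine step_pasch hP1 hs04 ?_ (InP_bv1 hd) (InP_s04 hd) ?_ ?_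
    · intro hc; have h := congrFun (congrArg Subtype.val hc) ⟨0, h0d⟩; simp [Pb, bv] at h
    · intro hc; have h := congrFun hc ⟨0, h0d⟩; simp [Pb, bv] at h
    · show bv d 0 + bv d 1 = bv d 1 + (bv d 0 + bv d 4) + bv d 4
      funext k; simp only [Pi.add_apply, bv]; split_ifs <;> first | rfl | decide | omega
  -- low-support elements
  have hone : ∀ a : ZMod 2, a ≠ 0 → a = 1 := by decide
  have hcase : ∀ a : ZMod 2, a = 0 ∨ a = 1 := by decide
  have hlow : ∀ z : Pt d,
      (∀ j : Fin (d + 1), j.val ≠ 0 → j.val ≠ 1 → j.val ≠ 4 → z.1 j = 0) →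
      z ∈ stsCl (Td d) ↑(Ud hd) := by
    intro z hsupp
    have hrep : z.1 = z.1 ⟨0, h0d⟩ • bv d 0 + z.1 ⟨1, h1d⟩ • bv d 1 +
        z.1 ⟨4, h4d⟩ • bv d 4 := by
      funext k
      simp only [Pi.add_apply, Pi.smul_apply, smul_eq_mul, bv]
      by_cases hk0 : k.val = 0
      · have hk : k = ⟨0, h0d⟩ := Fin.ext hk0
        rw [hk]; simp
      · by_cases hk1 : k.val = 1
        · have hk : k = ⟨1, h1d⟩ := Fin.ext hk1
          rw [hk]; simp
        · by_cases hk4 : k.val = 4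
          · have hk : k = ⟨4, h4d⟩ := Fin.ext hk4
            rw [hk]; simp
          · rw [hsupp k hk0 hk1 hk4]; simp [hk0, hk1, hk4]
    rcases hcase (z.1 ⟨0, h0d⟩) with h0 | h0 <;>
      rcases hcase (z.1 ⟨1, h1d⟩) with h1 | h1 <;>
      rcases hcase (z.1 ⟨4, h4d⟩) with h4 | h4 <;>
      rw [h0, h1, h4] at hrep <;>
      simp only [zero_smul, one_smul, add_zero, zero_add] at hrep <;>
      first
      | exact absurd hrep z.2
      | exact Set.mem_of_eq_of_mem (Subtype.ext hrep) hP0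
      | exact Set.mem_of_eq_of_mem (Subtype.ext hrep) hP1
      | exact Set.mem_of_eq_of_mem (Subtype.ext hrep) hP4
      | exact Set.mem_of_eq_of_mem (Subtype.ext hrep) hs01
      | exact Set.mem_of_eq_of_mem (Subtype.ext hrep) hs04
      | exact Set.mem_of_eq_of_mem (Subtype.ext hrep) hs14
      | exact Set.mem_of_eq_of_mem (Subtype.ext hrep) hD
  -- main induction on the number of coordinates outside {0,1,4}
  have main : ∀ n : ℕ, ∀ z : Pt d,
      (Finset.univ.filter fun j : Fin (d + 1) =>
        z.1 j ≠ 0 ∧ j.val ≠ 0 ∧ j.val ≠ 1 ∧ j.val ≠ 4).card = n →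
      z ∈ stsCl (Td d) ↑(Ud hd) := by
    intro n
    induction n using Nat.strong_induction_on with
    | _ n ih =>
      intro z hn
      rcases Nat.eq_zero_or_pos n with hn0 | hnpos
      · -- no outside support
        subst hn0
        apply hlow
        intro j hj0 hj1 hj4
        by_contra hne
        have : j ∈ Finset.univ.filter fun j : Fin (d + 1) =>
            z.1 j ≠ 0 ∧ j.val ≠ 0 ∧ j.val ≠ 1 ∧ j.val ≠ 4 :=
          Finset.mem_filter.mpr ⟨Finset.mem_univ _, hne, hj0, hj1, hj4⟩
        rw [Finset.card_eq_zero.mp hn] at this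
        exact absurd this (Finset.notMem_empty _)
      · -- pick an outside coordinate
        have hne : (Finset.univ.filter fun j : Fin (d + 1) =>
            z.1 j ≠ 0 ∧ j.val ≠ 0 ∧ j.val ≠ 1 ∧ j.val ≠ 4).Nonempty := by
          rw [← Finset.card_pos, hn]; exact hnpos
        obtain ⟨j, hj⟩ := hne
        rw [Finset.mem_filter] at hj
        obtain ⟨-, hjz, hj0, hj1, hj4⟩ := hj
        have hbvj : bv d j.val j = 1 := by simp [bv]
        by_cases hz' : z.1 + bv d j.val = 0
        · -- z is the basis vector
          have : z = Pb j := Subtype.ext (vec_add_eq_zero_iff.mp hz')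
          rw [this]; exact hbase j hj4
        · -- peel off coordinate j
          set z' : Pt d := ⟨z.1 + bv d j.val, hz'⟩ with hz'def
          have hcoordne : ∀ k : Fin (d + 1), k ≠ j → bv d j.val k = 0 := by
            intro k hk
            simp only [bv, ite_eq_right_iff]
            intro hc
            exact absurd (Fin.ext hc) hk
          have hfilter : (Finset.univ.filter fun k : Fin (d + 1) =>
              z'.1 k ≠ 0 ∧ k.val ≠ 0 ∧ k.val ≠ 1 ∧ k.val ≠ 4) =
              (Finset.univ.filter fun k : Fin (d + 1) =>
              z.1 k ≠ 0 ∧ k.val ≠ 0 ∧ k.val ≠ 1 ∧ k.val ≠ 4).erase j := by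
            ext k
            simp only [Finset.mem_filter, Finset.mem_erase, Finset.mem_univ, true_and]
            by_cases hk : k = j
            · subst hk
              simp only [Pi.add_apply, hbvj, hone _ hjz]
              constructor
              · rintro ⟨hv, -⟩
                exact absurd (by show (z.1 + bv d k.val) k = 0; simp only [Pi.add_apply, hbvj, hone _ hjz]; decide) hv
              · rintro ⟨hc, -⟩
                exact absurd rfl hc
            · have hzk : (z.1 + bv d j.val) k = z.1 k := by
                simp only [Pi.add_apply, hcoordne k hk, add_zero]
              show ((z.1 + bv d j.val) k ≠ 0 ∧ _) ↔ _
              rw [hzk]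
              constructor
              · intro hh; exact ⟨hk, hh.1, hh.2⟩
              · rintro ⟨-, hh⟩; exact hh
          have hcard : (Finset.univ.filter fun k : Fin (d + 1) =>
              z'.1 k ≠ 0 ∧ k.val ≠ 0 ∧ k.val ≠ 1 ∧ k.val ≠ 4).card = n - 1 := by
            rw [hfilter, Finset.card_erase_of_mem, hn]
            rw [Finset.mem_filter]
            exact ⟨Finset.mem_univ _, hjz, hj0, hj1, hj4⟩
          have hz'cl : z' ∈ stsCl (Td d) ↑(Ud hd) :=
            ih (n - 1) (by omega) z' hcard
          refine step_proj hz'cl (hbase j hj4) ?_ ?_ ?_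
          · intro hc
            have h := congrFun (congrArg Subtype.val hc) j
            simp only [hz'def, Pb, Pi.add_apply, hbvj] at h
            rw [hone _ hjz] at h
            exact absurd h (by decide)
          · refine fun hh => (not_InP_coord j hj0 hj1 hj4 ?_) hh.2.1
            simp [Pb, bv]
          · show z.1 = z'.1 + (Pb j).1
            simp only [hz'def, Pb]
            rw [add_assoc, vec_add_self, add_zero]
  exact Set.eq_univ_of_forall fun z => main _ z rfl

lemma isMinSpreading_Ud (hd : 4 ≤ d) : IsMinSpreading (Td d) ↑(Ud hd) := by
  refine ⟨isSpreading_Ud hd, ?_⟩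
  intro S' hS'
  obtain ⟨u, hu, hus⟩ := Set.exists_of_ssubset hS'
  have hu' := Finset.mem_coe.mp hu
  rw [Ud, Finset.mem_map] at hu'
  obtain ⟨j, hj, rfl⟩ := hu'
  have hj4 : j.val ≠ 4 := by
    intro hc
    exact (Finset.mem_erase.mp hj).1 (Fin.ext hc)
  refine not_spreading_of_closed ?_ (stsClosed_Mh hj4) ((⟨Pb, Pb_inj⟩ : _ ↪ _) j) ?_
  · intro x hx
    have hxU := hS'.1 hx
    have hx' := Finset.mem_coe.mp hxU
    rw [Ud, Finset.mem_map] at hx'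
    obtain ⟨k, hk, rfl⟩ := hx'
    have hkj : k ≠ j := by
      intro hc
      subst hc
      exact hus hx
    show bv d k.val j = 0
    simp only [bv, ite_eq_right_iff]
    intro hc
    exact absurd (Fin.ext hc.symm) hkj
  · show ¬ (bv d j.val j = 0)
    simp [bv]

end Spread

lemma card_Pt (d : ℕ) : Fintype.card (Pt d) = 2 ^ (d + 1) - 1 := by
  classical
  have h1 : Fintype.card (Vec d) = 2 ^ (d + 1) := by
    rw [Fintype.card_fun]
    simp
  have h2 : Fintype.card (Pt d) = Fintype.card (Vec d) - Fintype.card {v : Vec d // v = 0} := by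
    exact Fintype.card_subtype_compl _
  rw [h2, h1, Fintype.card_subtype_eq]


/-- For every `d ≥ 4` there is a Steiner triple system on `n = 2^(d+1) - 1` points
having a minimal spreading set of size `d = log₂ (n + 1) - 1`. -/
theorem exists_sts_minSpreading_card_eq_d (d : ℕ) (hd : 4 ≤ d) :
    ∃ T : Set (Finset (Fin (2 ^ (d + 1) - 1))),
      IsSTS T ∧
      ∃ U : Finset (Fin (2 ^ (d + 1) - 1)),
        IsMinSpreading T ↑U ∧ U.card = d := by
  classical
  obtain ⟨e⟩ : Nonempty (Pt d ≃ Fin (2 ^ (d + 1) - 1)) :=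
    ⟨Fintype.equivFinOfCardEq (card_Pt d)⟩
  refine ⟨tmap e (Td d), isSTS_tmap e isSTS_Td, (Ud hd).map e.toEmbedding, ?_, ?_⟩
  · have h := isMinSpreading_tmap e (isMinSpreading_Ud hd)
    have hcoe : ↑((Ud hd).map e.toEmbedding) = e '' ↑(Ud hd) := by
      rw [Finset.coe_map]; rfl
    rw [hcoe]; exact h
  · rw [Finset.card_map, card_Ud]
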